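/- arXiv:2510.01374 — 2 statements merged into one kernel-verified Lean document; each statement's English description precedes it below -/
import Mathlib

section
/- Let 1 < p < ∞ and 1/p + 1/q = 1. Then ‖sinc_1‖_{L^q(ℝ)} · ‖sinc_{1/8}‖_{L^p(ℝ)} ≤ c·(p + 1/(p−1)) for a universal constant c > 0 (one may take c = 4/π). -/
open MeasureTheory Real Set
open scoped ENNReal NNReal

noncomputable def sinc (a : ℝ) (x : ℝ) : ℝ :=
  if x = 0 then 2 * a else Real.sin (2 * π * a * x) / (π * x)

namespace SincAux

/-- Radial profile of the dominating function. -/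
noncomputable def F (M t : ℝ) : ℝ := if t ≤ 1 then M else t⁻¹

/-- Dominating function: `M` on `[-1,1]`, `|x|⁻¹` outside. -/
noncomputable def g (M : ℝ) (x : ℝ) : ℝ := F M |x|

lemma g_nonneg {M : ℝ} (hM : 0 ≤ M) (x : ℝ) : 0 ≤ g M x := by
  unfold g F
  split
  · exact hM
  · positivity

lemma integrableOn_F_Ioc {M r : ℝ} :
    IntegrableOn (fun t => F M t ^ r) (Ioc (0:ℝ) 1) := by
  have hc : IntegrableOn (fun _ : ℝ => M ^ r) (Ioc (0:ℝ) 1) volume :=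
    integrableOn_const measure_Ioc_lt_top.ne
  refine hc.congr_fun (fun t ht => ?_) measurableSet_Ioc
  simp [F, ht.2]

lemma integrableOn_F_Ioi {M r : ℝ} (hr : 1 < r) :
    IntegrableOn (fun t => F M t ^ r) (Ioi (1:ℝ)) := by
  refine (integrableOn_Ioi_rpow_of_lt (show -r < -1 by linarith) one_pos).congr_fun
    (fun t ht => ?_) measurableSet_Ioi
  have ht1 : (1:ℝ) < t := ht
  have ht0 : (0:ℝ) < t := lt_trans one_pos ht1
  simp only [F, if_neg (not_le.mpr ht1)]
  rw [Real.rpow_neg ht0.le, ← Real.inv_rpow ht0.le]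

lemma integrableOn_F_Ioi0 {M r : ℝ} (hr : 1 < r) :
    IntegrableOn (fun t => F M t ^ r) (Ioi (0:ℝ)) := by
  rw [← Ioc_union_Ioi_eq_Ioi (zero_le_one (α := ℝ))]
  exact integrableOn_F_Ioc.union (integrableOn_F_Ioi hr)

lemma integrableOn_g_Ioi0 {M r : ℝ} (hr : 1 < r) :
    IntegrableOn (fun x => g M x ^ r) (Ioi (0:ℝ)) := by
  refine IntegrableOn.congr_fun (integrableOn_F_Ioi0 (M := M) hr) (fun x hx => ?_)
    measurableSet_Ioi
  unfold g
  rw [abs_of_pos hx]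

lemma integrable_g_rpow {M r : ℝ} (hr : 1 < r) :
    Integrable (fun x => g M x ^ r) := by
  have hIoi : IntegrableOn (fun x => g M x ^ r) (Ioi (0:ℝ)) := integrableOn_g_Ioi0 hr
  have hIic : IntegrableOn (fun x => g M x ^ r) (Iic (0:ℝ)) := by
    rw [← Measure.map_neg_eq_self (volume : Measure ℝ)]
    have m : MeasurableEmbedding fun x : ℝ => -x := (Homeomorph.neg ℝ).measurableEmbedding
    rw [m.integrableOn_map_iff]
    have : (fun x : ℝ => g M x ^ r) ∘ (fun x : ℝ => -x) = fun x => g M x ^ r := by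
      funext x
      simp [Function.comp, g, abs_neg]
    rw [this]
    simp_rw [neg_preimage, neg_Iic, neg_zero]
    exact (integrableOn_Ici_iff_integrableOn_Ioi).mpr hIoi
  have h := hIic.union hIoi
  rwa [Iic_union_Ioi, integrableOn_univ] at h

lemma integral_g_rpow {M r : ℝ} (hM : 0 < M) (hr : 1 < r) :
    ∫ x, g M x ^ r = 2 * (M ^ r + 1 / (r - 1)) := by
  have habs : ∫ x, g M x ^ r = 2 * ∫ t in Ioi (0:ℝ), F M t ^ r :=
    integral_comp_abs (f := fun t => F M t ^ r)
  have hsplit : ∫ t in Ioi (0:ℝ), F M t ^ r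
      = (∫ t in Ioc (0:ℝ) 1, F M t ^ r) + ∫ t in Ioi (1:ℝ), F M t ^ r := by
    rw [← setIntegral_union (Ioc_disjoint_Ioi le_rfl) measurableSet_Ioi
      integrableOn_F_Ioc (integrableOn_F_Ioi hr), Ioc_union_Ioi_eq_Ioi zero_le_one]
  have hA : ∫ t in Ioc (0:ℝ) 1, F M t ^ r = M ^ r := by
    rw [setIntegral_congr_fun measurableSet_Ioc
      (show EqOn (fun t => F M t ^ r) (fun _ => M ^ r) (Ioc (0:ℝ) 1) from
        fun t ht => by simp [F, ht.2])]
    simp [Real.volume_Ioc]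
  have hB : ∫ t in Ioi (1:ℝ), F M t ^ r = 1 / (r - 1) := by
    rw [setIntegral_congr_fun measurableSet_Ioi
      (show EqOn (fun t => F M t ^ r) (fun t => t ^ (-r)) (Ioi (1:ℝ)) from by
        intro t ht
        have ht1 : (1:ℝ) < t := ht
        have ht0 : (0:ℝ) < t := lt_trans one_pos ht1
        simp only [F, if_neg (not_le.mpr ht1)]
        rw [Real.rpow_neg ht0.le, ← Real.inv_rpow ht0.le]),
      integral_Ioi_rpow_of_lt (show -r < -1 by linarith) one_pos]
    rw [Real.one_rpow, div_eq_div_iff (by linarith : -r + 1 < 0).ne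
      (by linarith : (0:ℝ) < r - 1).ne']
    ring
  rw [habs, hsplit, hA, hB]

lemma eLpNorm_g_eq {M r : ℝ} (hM : 0 < M) (hr : 1 < r) :
    eLpNorm (g M) (ENNReal.ofReal r) volume
      = ENNReal.ofReal ((2 * (M ^ r + 1 / (r - 1))) ^ (1 / r)) := by
  have hr0 : (0:ℝ) < r := lt_trans one_pos hr
  rw [eLpNorm_eq_lintegral_rpow_enorm_toReal (by simp [hr0]) (by simp),
    ENNReal.toReal_ofReal hr0.le]
  have hpt : ∀ x, ‖g M x‖ₑ ^ r = ENNReal.ofReal (g M x ^ r) := by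
    intro x
    rw [← ofReal_norm_eq_enorm, Real.norm_eq_abs, abs_of_nonneg (g_nonneg hM.le x),
      ENNReal.ofReal_rpow_of_nonneg (g_nonneg hM.le x) hr0.le]
  simp_rw [hpt]
  rw [← ofReal_integral_eq_lintegral_ofReal (integrable_g_rpow hr)
      (Filter.Eventually.of_forall fun x => Real.rpow_nonneg (g_nonneg hM.le x) r),
    integral_g_rpow hM hr]
  have hbase : (0:ℝ) ≤ 2 * (M ^ r + 1 / (r - 1)) := by
    have h1 : (0:ℝ) ≤ M ^ r := Real.rpow_nonneg hM.le r
    have h2 : (0:ℝ) ≤ 1 / (r - 1) := (div_pos one_pos (by linarith)).le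
    linarith
  rw [ENNReal.ofReal_rpow_of_nonneg hbase (by positivity)]

lemma abs_sinc_le {a : ℝ} (ha : 0 < a) (x : ℝ) : |sinc a x| ≤ 2 * a := by
  by_cases hx : x = 0
  · simp [_root_.sinc, hx, abs_of_nonneg (by positivity : (0:ℝ) ≤ 2 * a)]
  · have hx0 : 0 < |x| := abs_pos.mpr hx
    rw [_root_.sinc, if_neg hx, abs_div, abs_mul, abs_of_pos pi_pos, div_le_iff₀ (by positivity)]
    calc |Real.sin (2 * π * a * x)| ≤ |2 * π * a * x| := abs_sin_le_abs
      _ = 2 * π * a * |x| := by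
          rw [abs_mul, abs_of_pos (by positivity : (0:ℝ) < 2 * π * a)]
      _ = 2 * a * (π * |x|) := by ring
      _ ≤ 2 * a * (π * |x|) := le_rfl

lemma abs_sinc_le_inv {a : ℝ} (x : ℝ) (hx : 1 < |x|) : |sinc a x| ≤ |x|⁻¹ := by
  have hx0 : x ≠ 0 := by
    intro h
    simp [h] at hx
    linarith
  have hx0' : 0 < |x| := abs_pos.mpr hx0
  rw [_root_.sinc, if_neg hx0, abs_div, abs_mul, abs_of_pos pi_pos, div_le_iff₀ (by positivity)]
  calc |Real.sin (2 * π * a * x)| ≤ 1 := Real.abs_sin_le_one _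
    _ ≤ |x|⁻¹ * (π * |x|) := by
        rw [show |x|⁻¹ * (π * |x|) = π * (|x|⁻¹ * |x|) by ring, inv_mul_cancel₀ hx0'.ne',
          mul_one]
        linarith [Real.pi_gt_three]

lemma norm_sinc_le_g {a : ℝ} (ha : 0 < a) (x : ℝ) : ‖sinc a x‖ ≤ g (2 * a) x := by
  rw [Real.norm_eq_abs]
  unfold g F
  split
  · exact abs_sinc_le ha x
  · exact abs_sinc_le_inv x (not_le.mp (by assumption))

lemma norm_bound {a r : ℝ} (ha : 0 < a) (hr : 1 < r) :
    (eLpNorm (sinc a) (ENNReal.ofReal r) volume).toReal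
      ≤ (2 * ((2 * a) ^ r + 1 / (r - 1))) ^ (1 / r) := by
  have hbase : (0:ℝ) ≤ 2 * ((2 * a) ^ r + 1 / (r - 1)) := by
    have h1 : (0:ℝ) ≤ (2 * a) ^ r := Real.rpow_nonneg (by positivity) r
    have h2 : (0:ℝ) ≤ 1 / (r - 1) := (div_pos one_pos (by linarith)).le
    linarith
  refine ENNReal.toReal_le_of_le_ofReal (Real.rpow_nonneg hbase _) ?_
  calc eLpNorm (sinc a) (ENNReal.ofReal r) volume
      ≤ eLpNorm (g (2 * a)) (ENNReal.ofReal r) volume :=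
        eLpNorm_mono_real (norm_sinc_le_g ha)
    _ = ENNReal.ofReal ((2 * ((2 * a) ^ r + 1 / (r - 1))) ^ (1 / r)) :=
        eLpNorm_g_eq (show (0:ℝ) < 2 * a by linarith) hr

lemma rpow_le_one_add {x s : ℝ} (hx : 0 ≤ x) (hs0 : 0 ≤ s) (hs1 : s ≤ 1) :
    x ^ s ≤ 1 + x := by
  rcases le_total x 1 with h | h
  · exact le_trans (Real.rpow_le_one hx h hs0) (by linarith)
  · calc x ^ s ≤ x ^ (1:ℝ) := Real.rpow_le_rpow_of_exponent_le h hs1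
      _ = x := Real.rpow_one x
      _ ≤ 1 + x := by linarith

lemma real_rpow_add_le {x y s : ℝ} (hx : 0 ≤ x) (hy : 0 ≤ y) (hs0 : 0 ≤ s) (hs1 : s ≤ 1) :
    (x + y) ^ s ≤ x ^ s + y ^ s := by
  lift x to NNReal using hx
  lift y to NNReal using hy
  have h := NNReal.rpow_add_le_add_rpow x y hs0 hs1
  exact_mod_cast h

end SincAux

open SincAux

/-- For conjugate exponents `1 < p, q < ∞`,
`‖sinc_1‖_{L^q} · ‖sinc_{1/8}‖_{L^p} ≤ c·(p + 1/(p−1))` for a universal constant `c > 0`. -/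
theorem sinc_norm_product_bound :
    ∃ c : ℝ, 0 < c ∧ ∀ p q : ℝ, 1 < p → 1 / p + 1 / q = 1 →
      (eLpNorm (sinc 1) (ENNReal.ofReal q) volume).toReal *
          (eLpNorm (sinc (1 / 8)) (ENNReal.ofReal p) volume).toReal ≤
        c * (p + 1 / (p - 1)) := by
  refine ⟨15, by norm_num, fun p q hp hpq => ?_⟩
  have hp0 : (0:ℝ) < p := by linarith
  have hq0 : (0:ℝ) < q := by
    have h1 : 1 / q = 1 - 1 / p := by linarith
    have h2 : 1 / p < 1 := by
      rw [div_lt_one hp0]; linarith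
    have h3 : 0 < 1 / q := by linarith
    exact (one_div_pos).mp h3
  have hpq2 : p * q = p + q := by
    field_simp at hpq
    linarith
  have hq1 : (1:ℝ) < q := by nlinarith
  have hinv : 1 / (p - 1) = q - 1 := by
    have hp1 : p - 1 ≠ 0 := by intro h; rw [sub_eq_zero] at h; linarith
    field_simp
    nlinarith
  have hinv' : 1 / (q - 1) = p - 1 := by
    have hq1' : q - 1 ≠ 0 := by intro h; rw [sub_eq_zero] at h; linarith
    field_simp
    nlinarith
  -- bounds on each factor
  have hA := norm_bound (a := 1) one_pos hq1
  have hB := norm_bound (a := 1/8) (by norm_num) hp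
  have hA2 : (2 * ((2 * 1) ^ q + 1 / (q - 1))) ^ (1 / q) ≤ 3 + 2 * p := by
    have hq1le : 1 / q ≤ 1 := by
      rw [div_le_one hq0]; linarith
    have hq1nn : 0 ≤ 1 / q := by positivity
    have h2q : (0:ℝ) ≤ 2 * (2:ℝ) ^ q := by positivity
    have hcq : (0:ℝ) ≤ 2 / (q - 1) := by
      have : (0:ℝ) < q - 1 := by linarith
      positivity
    have hsplit : (2 * ((2 * 1) ^ q + 1 / (q - 1))) = 2 * (2:ℝ) ^ q + 2 / (q - 1) := by
      norm_num
      ring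
    rw [hsplit]
    calc (2 * (2:ℝ) ^ q + 2 / (q - 1)) ^ (1 / q)
        ≤ (2 * (2:ℝ) ^ q) ^ (1 / q) + (2 / (q - 1)) ^ (1 / q) :=
          real_rpow_add_le h2q hcq hq1nn hq1le
      _ ≤ 4 + (1 + 2 / (q - 1)) := by
          gcongr
          · -- (2 * 2 ^ q) ^ (1/q) ≤ 4
            have h1 : 2 * (2:ℝ) ^ q = (2:ℝ) ^ (1 + q) := by
              rw [Real.rpow_add two_pos, Real.rpow_one]
            rw [h1, ← Real.rpow_mul (by norm_num : (0:ℝ) ≤ 2)]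
            have h2 : (1 + q) * (1 / q) ≤ 2 := by
              have : (1 + q) * (1 / q) = 1 / q + 1 := by field_simp
              rw [this]; linarith
            calc (2:ℝ) ^ ((1 + q) * (1 / q)) ≤ (2:ℝ) ^ (2:ℝ) :=
                  Real.rpow_le_rpow_of_exponent_le one_le_two h2
              _ = 4 := by
                  rw [show (2:ℝ) = ((2:ℕ):ℝ) from by norm_num, Real.rpow_natCast]
                  norm_num
          · exact rpow_le_one_add hcq hq1nn hq1le
      _ = 5 + 2 * (1 / (q - 1)) := by ring
      _ = 3 + 2 * p := by rw [hinv']; ring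
  have hB2 : (2 * ((2 * (1/8)) ^ p + 1 / (p - 1))) ^ (1 / p) ≤ 1 + 2 * q := by
    have hp1le : 1 / p ≤ 1 := by
      rw [div_le_one hp0]; linarith
    have hp1nn : 0 ≤ 1 / p := by positivity
    have hbase : (0:ℝ) ≤ 2 * ((2 * (1/8)) ^ p + 1 / (p - 1)) := by
      have h1 : (0:ℝ) ≤ (2 * (1/8 : ℝ)) ^ p := Real.rpow_nonneg (by norm_num) p
      have h2 : (0:ℝ) ≤ 1 / (p - 1) := by
        have : (0:ℝ) < p - 1 := by linarith
        positivity
      linarith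
    have hle : 2 * ((2 * (1/8 : ℝ)) ^ p + 1 / (p - 1)) ≤ 2 * q := by
      have h1 : (2 * (1/8 : ℝ)) ^ p ≤ 1 :=
        Real.rpow_le_one (by norm_num) (by norm_num) hp0.le
      rw [hinv]
      nlinarith
    calc (2 * ((2 * (1/8 : ℝ)) ^ p + 1 / (p - 1))) ^ (1 / p)
        ≤ 1 + 2 * ((2 * (1/8 : ℝ)) ^ p + 1 / (p - 1)) :=
          rpow_le_one_add hbase hp1nn hp1le
      _ ≤ 1 + 2 * q := by linarith
  have hXA : (eLpNorm (sinc 1) (ENNReal.ofReal q) volume).toReal ≤ 3 + 2 * p :=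
    le_trans hA hA2
  have hXB : (eLpNorm (sinc (1/8)) (ENNReal.ofReal p) volume).toReal ≤ 1 + 2 * q :=
    le_trans hB hB2
  calc (eLpNorm (sinc 1) (ENNReal.ofReal q) volume).toReal *
        (eLpNorm (sinc (1 / 8)) (ENNReal.ofReal p) volume).toReal
      ≤ (3 + 2 * p) * (1 + 2 * q) :=
        mul_le_mul hXA hXB ENNReal.toReal_nonneg (by linarith)
    _ ≤ 15 * (p + 1 / (p - 1)) := by
        rw [hinv]
        nlinarith [mul_pos (sub_pos.mpr hp) (sub_pos.mpr hq1), sq_nonneg (3*p - 4),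
          sq_nonneg (p - 2), sq_nonneg (q - 2)]
end

section
/- Let 1 < p < ∞, a > 0, and let φ be a Schwartz function with supp(φ̂) ⊂ ℝ_+. Then the Hankel operator H_{θ̄_a²φ} : H^p_+ → H^p_− satisfies H_{θ̄_a²φ} = θ̄_a T_φ θ_a P_− θ̄_a², where T_φ is the Toeplitz operator on PW_a^p and θ_a(x) = e^{2πiax}. -/
open MeasureTheory Real SchwartzMap
open scoped FourierTransform

set_option maxHeartbeats 1000000 in
private lemma fourier_eq' (f : ℝ → ℂ) (w : ℝ) :
    𝓕 f w = ∫ v : ℝ, Complex.exp ((-2 * π * v * w : ℝ) * Complex.I) * f v := by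
  simp_rw [Real.fourier_real_eq_integral_exp_smul, smul_eq_mul]

set_option maxHeartbeats 1000000 in
private lemma fourierInv_eq' (f : ℝ → ℂ) (w : ℝ) :
    𝓕⁻ f w = ∫ v : ℝ, Complex.exp ((2 * π * v * w : ℝ) * Complex.I) * f v := by
  rw [Real.fourierInv_eq_fourier_neg, _root_.fourier_eq']
  simp only [mul_neg, neg_mul, neg_neg]

set_option maxHeartbeats 1000000 in
private lemma key_conv (φ K : ℝ → ℂ) (hφc : Continuous φ) (hφi : Integrable φ)
    (hKm : Measurable K) (hKi : Integrable K) (η : ℝ) :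
    𝓕 (fun y => φ y * ∫ ξ : ℝ, Complex.exp ((2 * π * ξ * y : ℝ) * Complex.I) * K ξ) η
      = ∫ ξ : ℝ, K ξ * 𝓕 φ (η - ξ) := by
  have hexp : ∀ r : ℝ, ‖Complex.exp ((r : ℂ) * Complex.I)‖ = 1 := by
    intro r; rw [Complex.norm_exp_ofReal_mul_I]
  have hint : Integrable (Function.uncurry fun y ξ : ℝ =>
      Complex.exp ((-2 * π * y * η : ℝ) * Complex.I) *
        (φ y * (Complex.exp ((2 * π * ξ * y : ℝ) * Complex.I) * K ξ)))
      (volume.prod volume) := by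
    refine Integrable.mono' (hφi.norm.mul_prod hKi.norm) ?_ ?_
    · apply AEStronglyMeasurable.mul
      · exact (Complex.continuous_exp.comp (by fun_prop)).aestronglyMeasurable
      · apply AEStronglyMeasurable.mul
        · exact (hφc.comp continuous_fst).aestronglyMeasurable
        · apply AEStronglyMeasurable.mul
          · exact (Complex.continuous_exp.comp (by fun_prop)).aestronglyMeasurable
          · exact (hKm.comp measurable_snd).aestronglyMeasurable
    · refine Filter.Eventually.of_forall fun p => ?_
      simp only [Function.uncurry, norm_mul, hexp, one_mul]
      exact le_refl _
  rw [_root_.fourier_eq']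
  calc (∫ y : ℝ, Complex.exp ((-2 * π * y * η : ℝ) * Complex.I) *
          (φ y * ∫ ξ : ℝ, Complex.exp ((2 * π * ξ * y : ℝ) * Complex.I) * K ξ))
      = ∫ y : ℝ, ∫ ξ : ℝ, Complex.exp ((-2 * π * y * η : ℝ) * Complex.I) *
          (φ y * (Complex.exp ((2 * π * ξ * y : ℝ) * Complex.I) * K ξ)) := by
        simp_rw [integral_const_mul]
    _ = ∫ ξ : ℝ, ∫ y : ℝ, Complex.exp ((-2 * π * y * η : ℝ) * Complex.I) *
          (φ y * (Complex.exp ((2 * π * ξ * y : ℝ) * Complex.I) * K ξ)) :=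
        integral_integral_swap hint
    _ = ∫ ξ : ℝ, K ξ * 𝓕 φ (η - ξ) := by
        refine integral_congr_ae (Filter.Eventually.of_forall fun ξ => ?_)
        dsimp only
        rw [_root_.fourier_eq', ← integral_const_mul]
        refine integral_congr_ae (Filter.Eventually.of_forall fun y => ?_)
        dsimp only
        have h2 : Complex.exp ((-2 * π * y * η : ℝ) * Complex.I) *
            Complex.exp ((2 * π * ξ * y : ℝ) * Complex.I)
            = Complex.exp ((-2 * π * y * (η - ξ) : ℝ) * Complex.I) := by
          rw [← Complex.exp_add]; congr 1; push_cast; ring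
        rw [← h2]; ring

set_option maxHeartbeats 2000000 in
/-- For `1 < p < ∞`, `a > 0`, and Schwartz `φ` with `supp φ̂ ⊂ ℝ₊`, the Hankel operator
`H_{θ̄_a²φ} : H^p₊ → H^p₋` coincides with `θ̄_a T_φ θ_a P₋ θ̄_a²` (where `T_φ` is the Toeplitz
operator on `PW_a^p`), evaluated here pointwise on Schwartz functions `g ∈ H^p₊`:
`P₋[θ̄_a²φg] = θ̄_a · P_a[φ · θ_a P₋[θ̄_a² g]]` with `P₋, P_a` given as Fourier multipliers. -/
theorem hankel_eq_toeplitz (a p : ℝ) (ha : 0 < a) (hp : 1 < p) (φ g : 𝓢(ℝ, ℂ))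
    (hφ : ∀ ξ : ℝ, ξ < 0 → 𝓕 ⇑φ ξ = 0)
    (hg : ∀ ξ : ℝ, ξ < 0 → 𝓕 ⇑g ξ = 0) :
    ∀ x : ℝ,
      𝓕⁻ (Set.indicator (Set.Iio 0)
          (𝓕 fun y : ℝ => Complex.exp (-(2 * π * (2 * a) * y) * Complex.I) * φ y * g y)) x =
        Complex.exp (-(2 * π * a * x) * Complex.I) *
          𝓕⁻ (Set.indicator (Set.Icc (-a) a)
            (𝓕 fun y : ℝ => φ y *
              (Complex.exp ((2 * π * a * y) * Complex.I) *
                𝓕⁻ (Set.indicator (Set.Iio 0) (fun ξ : ℝ => 𝓕 ⇑g (ξ + 2 * a))) y))) x := by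
  intro x
  have hGc : Continuous (𝓕 ⇑g) := by
    have := (fourierTransformCLM ℂ g).continuous
    rwa [fourierTransformCLM_apply] at this
  have hGi : Integrable (𝓕 ⇑g) := by
    have := (fourierTransformCLM ℂ g).integrable (μ := volume)
    rwa [fourierTransformCLM_apply] at this
  set K : ℝ → ℂ := Set.indicator (Set.Iio 0) (fun ξ : ℝ => 𝓕 ⇑g (ξ + 2 * a)) with hKdef
  have hKm : Measurable K :=
    ((hGc.measurable).comp (measurable_add_const (2 * a))).indicator measurableSet_Iio
  have hKi : Integrable K := (hGi.comp_add_right (2 * a)).indicator measurableSet_Iio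
  have hK'm : Measurable fun ξ : ℝ => K (ξ - a) := hKm.comp (measurable_sub_const a)
  have hK'i : Integrable fun ξ : ℝ => K (ξ - a) := hKi.comp_sub_right a
  have hginv : 𝓕⁻ (𝓕 ⇑g) = ⇑g := g.continuous.fourierInv_fourier_eq g.integrable hGi
  -- convolution formula for `𝓕 (φ g)`
  have hF : ∀ η : ℝ, 𝓕 (fun y : ℝ => φ y * g y) η = ∫ ξ : ℝ, 𝓕 ⇑g ξ * 𝓕 ⇑φ (η - ξ) := by
    intro η
    have h1 : (fun y : ℝ => φ y * g y)
        = fun y : ℝ => φ y * ∫ ξ : ℝ, Complex.exp ((2 * π * ξ * y : ℝ) * Complex.I) * 𝓕 ⇑g ξ := by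
      funext y
      rw [← _root_.fourierInv_eq', hginv]
    rw [h1]
    exact key_conv ⇑φ (𝓕 ⇑g) φ.continuous φ.integrable hGc.measurable hGi η
  -- the symbol `θ̄_a² φ g` has Fourier transform `𝓕(φ g)(· + 2a)`
  have hH : (𝓕 fun y : ℝ => Complex.exp (-(2 * π * (2 * a) * y) * Complex.I) * φ y * g y)
      = fun ξ : ℝ => 𝓕 (fun y : ℝ => φ y * g y) (ξ + 2 * a) := by
    funext ξ
    rw [_root_.fourier_eq', _root_.fourier_eq']
    refine integral_congr_ae (Filter.Eventually.of_forall fun y => ?_)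
    dsimp only
    have h2 : Complex.exp ((-2 * π * y * (ξ + 2 * a) : ℝ) * Complex.I)
        = Complex.exp ((-2 * π * y * ξ : ℝ) * Complex.I) *
          Complex.exp (-(2 * π * (2 * a) * (y : ℂ)) * Complex.I) := by
      rw [← Complex.exp_add]; congr 1; push_cast; ring
    rw [h2]; ring
  -- modulation of the inner function
  have hinner : (fun y : ℝ => φ y * (Complex.exp ((2 * π * a * y) * Complex.I) * 𝓕⁻ K y))
      = fun y : ℝ => φ y *
          ∫ ξ : ℝ, Complex.exp ((2 * π * ξ * y : ℝ) * Complex.I) * K (ξ - a) := by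
    funext y
    congr 1
    rw [_root_.fourierInv_eq', ← integral_const_mul,
      ← integral_sub_right_eq_self (fun ξ : ℝ =>
        Complex.exp ((2 * π * a * (y : ℂ)) * Complex.I) *
          (Complex.exp ((2 * π * ξ * y : ℝ) * Complex.I) * K ξ)) a]
    refine integral_congr_ae (Filter.Eventually.of_forall fun ξ => ?_)
    dsimp only
    have h2 : Complex.exp ((2 * π * ξ * y : ℝ) * Complex.I)
        = Complex.exp ((2 * π * a * (y : ℂ)) * Complex.I) *
          Complex.exp ((2 * π * (ξ - a) * y : ℝ) * Complex.I) := by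
      rw [← Complex.exp_add]; congr 1; push_cast; ring
    rw [h2]; ring
  have hM : ∀ η : ℝ,
      𝓕 (fun y : ℝ => φ y * (Complex.exp ((2 * π * a * y) * Complex.I) * 𝓕⁻ K y)) η
        = ∫ ξ : ℝ, K (ξ - a) * 𝓕 ⇑φ (η - ξ) := by
    intro η
    rw [hinner]
    exact key_conv ⇑φ (fun ξ => K (ξ - a)) φ.continuous φ.integrable hK'm hK'i η
  -- translation identity for the right-hand side
  have hRHS : ∀ M : ℝ → ℂ,
      (∫ ξ : ℝ, Complex.exp ((2 * π * ξ * x : ℝ) * Complex.I) * M (ξ + a))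
        = Complex.exp (-(2 * π * a * x) * Complex.I) *
            ∫ v : ℝ, Complex.exp ((2 * π * v * x : ℝ) * Complex.I) * M v := by
    intro M
    rw [← integral_const_mul,
      ← integral_add_right_eq_self (fun v : ℝ =>
        Complex.exp (-(2 * π * a * x) * Complex.I) *
          (Complex.exp ((2 * π * v * x : ℝ) * Complex.I) * M v)) a]
    refine integral_congr_ae (Filter.Eventually.of_forall fun ξ => ?_)
    dsimp only
    have h2 : Complex.exp ((2 * π * ξ * x : ℝ) * Complex.I)
        = Complex.exp (-(2 * π * a * (x : ℂ)) * Complex.I) *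
          Complex.exp ((2 * π * (ξ + a) * x : ℝ) * Complex.I) := by
      rw [← Complex.exp_add]; congr 1; push_cast; ring
    rw [h2]; ring
  -- assemble
  rw [hH, _root_.fourierInv_eq', _root_.fourierInv_eq',
    ← hRHS (Set.indicator (Set.Icc (-a) a)
      (𝓕 fun y : ℝ => φ y * (Complex.exp ((2 * π * a * y) * Complex.I) * 𝓕⁻ K y)))]
  have h0 : ∀ᵐ ξ : ℝ, ξ ≠ (0 : ℝ) := by
    refine ae_iff.mpr ?_
    simp
  refine integral_congr_ae ?_
  filter_upwards [h0] with ξ hξ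
  congr 1
  rcases lt_or_gt_of_ne hξ with hneg | hpos
  · -- ξ < 0
    rw [Set.indicator_of_mem (show ξ ∈ Set.Iio (0 : ℝ) from hneg)]
    by_cases hge : -(2 * a) ≤ ξ
    · rw [Set.indicator_of_mem
        (show ξ + a ∈ Set.Icc (-a) a from ⟨by linarith, by linarith⟩)]
      rw [hF, hM]
      rw [← integral_sub_right_eq_self (fun t : ℝ => K (t - a) * 𝓕 ⇑φ (ξ + a - t)) a]
      refine integral_congr_ae (Filter.Eventually.of_forall fun t => ?_)
      dsimp only
      rw [show t - a - a = t - 2 * a by ring, show ξ + a - (t - a) = ξ + 2 * a - t by ring]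
      by_cases ht : t - 2 * a < 0
      · rw [hKdef, Set.indicator_of_mem (show t - 2 * a ∈ Set.Iio (0 : ℝ) from ht),
          show t - 2 * a + 2 * a = t by ring]
      · rw [hKdef, Set.indicator_of_notMem (by simpa using ht)]
        push_neg at ht
        rw [hφ _ (by linarith), mul_zero, zero_mul]
    · push_neg at hge
      rw [Set.indicator_of_notMem
        (show ξ + a ∉ Set.Icc (-a) a from fun h => absurd h.1 (by push_neg; linarith))]
      rw [hF]
      have hzero : ∀ t : ℝ, 𝓕 ⇑g t * 𝓕 ⇑φ (ξ + 2 * a - t) = 0 := by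
        intro t
        rcases lt_or_ge t 0 with h | h
        · rw [hg t h, zero_mul]
        · rw [hφ _ (by linarith), mul_zero]
      simp only [hzero, integral_zero]
  · -- 0 < ξ
    rw [Set.indicator_of_notMem (show ξ ∉ Set.Iio (0 : ℝ) by simp; linarith),
      Set.indicator_of_notMem
        (show ξ + a ∉ Set.Icc (-a) a from fun h => absurd h.2 (by push_neg; linarith))]
end
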